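/- Let d be the bisimulation metric, i.e., the unique fixed point of F(d)(sᵢ,sⱼ) = (1-c)|r(sᵢ)-r(sⱼ)| + c·W₁(d)(P(sᵢ),P(sⱼ)) for a policy-fixed Markov reward process on finite S with rewards in [0, R_max]. Then for all sᵢ, sⱼ: (1-c)·|V(sᵢ) - V(sⱼ)| ≤ d(sᵢ, sⱼ), where V is the value function with discount factor c. -/
import Mathlib


open Finset
noncomputable section

/-- The 1-Wasserstein distance between two distributions `μ ν` on a finite set `S`
with ground cost `d`, as the infimum over couplings of the expected cost. -/
def W1 {S : Type*} [Fintype S] (d : S → S → ℝ) (μ ν : S → ℝ) : ℝ :=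
  sInf {v : ℝ | ∃ c : S → S → ℝ, (∀ x y, 0 ≤ c x y) ∧
    (∀ x, ∑ y, c x y = μ x) ∧ (∀ y, ∑ x, c x y = ν y) ∧
    v = ∑ x, ∑ y, d x y * c x y}

/-- The bisimulation metric upper-bounds the (scaled) value difference:
`(1-c)|V(sᵢ) - V(sⱼ)| ≤ d(sᵢ,sⱼ)` where `V` is the value function of the
Markov reward process with discount factor `c`. -/
theorem bisim_metric_bounds_value_diff {S : Type*} [Fintype S] [Nonempty S]
    (r : S → ℝ) (P : S → S → ℝ) (c Rmax : ℝ) (hc0 : 0 ≤ c) (hc1 : c < 1)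
    (hr : ∀ s, 0 ≤ r s ∧ r s ≤ Rmax)
    (hP : ∀ s, (∀ s', 0 ≤ P s s') ∧ ∑ s', P s s' = 1)
    (d : S → S → ℝ)
    (hfix : ∀ si sj, d si sj = (1 - c) * |r si - r sj| + c * W1 d (P si) (P sj))
    (V : S → ℝ) (hV : ∀ s, V s = r s + c * ∑ s', P s s' * V s') :
    ∀ si sj, (1 - c) * |V si - V sj| ≤ d si sj := by
  have h1c : (0:ℝ) < 1 - c := by linarith
  set f : S × S → ℝ := fun p => (1 - c) * |V p.1 - V p.2| - d p.1 p.2 with hf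
  have hne : (Finset.univ : Finset (S × S)).Nonempty := Finset.univ_nonempty
  set M := Finset.univ.sup' hne f with hM
  have hle : ∀ x y, (1 - c) * |V x - V y| - d x y ≤ M := fun x y =>
    Finset.le_sup' f (Finset.mem_univ (x, y))
  have key : ∀ si sj, (1 - c) * |V si - V sj| - d si sj ≤ c * M := by
    intro si sj
    have hdiff : V si - V sj =
        (r si - r sj) + c * ((∑ s', P si s' * V s') - ∑ s', P sj s' * V s') := by
      rw [hV si, hV sj]; ring
    have hW : (1 - c) * |(∑ s', P si s' * V s') - ∑ s', P sj s' * V s'| - M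
        ≤ W1 d (P si) (P sj) := by
      apply le_csInf
      · exact ⟨_, ⟨fun x y => P si x * P sj y,
          fun x y => mul_nonneg ((hP si).1 x) ((hP sj).1 y),
          fun x => by rw [← Finset.mul_sum, (hP sj).2, mul_one],
          fun y => by rw [← Finset.sum_mul, (hP si).2, one_mul], rfl⟩⟩
      · rintro v ⟨γ, hγ0, hγ1, hγ2, rfl⟩
        have hA : (∑ s', P si s' * V s') = ∑ x, ∑ y, γ x y * V x := by
          refine Finset.sum_congr rfl fun x _ => ?_
          rw [← Finset.sum_mul, hγ1]
        have hB : (∑ s', P sj s' * V s') = ∑ x, ∑ y, γ x y * V y := by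
          rw [Finset.sum_comm]
          refine Finset.sum_congr rfl fun y _ => ?_
          rw [← Finset.sum_mul, hγ2]
        have hAB : (∑ s', P si s' * V s') - (∑ s', P sj s' * V s')
            = ∑ x, ∑ y, γ x y * (V x - V y) := by
          rw [hA, hB, ← Finset.sum_sub_distrib]
          refine Finset.sum_congr rfl fun x _ => ?_
          rw [← Finset.sum_sub_distrib]
          exact Finset.sum_congr rfl fun y _ => by ring
        have hmass : ∑ x, ∑ y, γ x y = 1 := by
          rw [Finset.sum_congr rfl fun x _ => hγ1 x, (hP si).2]
        have habs : |(∑ s', P si s' * V s') - ∑ s', P sj s' * V s'|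
            ≤ ∑ x, ∑ y, γ x y * |V x - V y| := by
          rw [hAB]
          calc |∑ x, ∑ y, γ x y * (V x - V y)|
              ≤ ∑ x, |∑ y, γ x y * (V x - V y)| := Finset.abs_sum_le_sum_abs _ _
            _ ≤ ∑ x, ∑ y, γ x y * |V x - V y| := by
                refine Finset.sum_le_sum fun x _ => ?_
                calc |∑ y, γ x y * (V x - V y)| ≤ ∑ y, |γ x y * (V x - V y)| :=
                      Finset.abs_sum_le_sum_abs _ _
                  _ = ∑ y, γ x y * |V x - V y| := by
                      refine Finset.sum_congr rfl fun y _ => ?_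
                      rw [abs_mul, abs_of_nonneg (hγ0 x y)]
        have hstep : (1 - c) * (∑ x, ∑ y, γ x y * |V x - V y|)
            ≤ ∑ x, ∑ y, γ x y * (d x y + M) := by
          rw [Finset.mul_sum]
          refine Finset.sum_le_sum fun x _ => ?_
          rw [Finset.mul_sum]
          refine Finset.sum_le_sum fun y _ => ?_
          have := hle x y
          calc (1 - c) * (γ x y * |V x - V y|) = γ x y * ((1 - c) * |V x - V y|) := by ring
            _ ≤ γ x y * (d x y + M) := by
                exact mul_le_mul_of_nonneg_left (by linarith) (hγ0 x y)
        have hsplit : ∑ x, ∑ y, γ x y * (d x y + M)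
            = (∑ x, ∑ y, d x y * γ x y) + M := by
          have : ∑ x, ∑ y, γ x y * (d x y + M)
              = (∑ x, ∑ y, d x y * γ x y) + M * (∑ x, ∑ y, γ x y) := by
            rw [Finset.mul_sum, ← Finset.sum_add_distrib]
            refine Finset.sum_congr rfl fun x _ => ?_
            rw [Finset.mul_sum, ← Finset.sum_add_distrib]
            exact Finset.sum_congr rfl fun y _ => by ring
          rw [this, hmass, mul_one]
        have := mul_le_mul_of_nonneg_left habs (le_of_lt h1c)
        linarith
    have htri : (1 - c) * |V si - V sj| ≤
        (1 - c) * |r si - r sj| +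
        c * ((1 - c) * |(∑ s', P si s' * V s') - ∑ s', P sj s' * V s'|) := by
      rw [hdiff]
      have h1 : |(r si - r sj) + c * ((∑ s', P si s' * V s') - ∑ s', P sj s' * V s')|
          ≤ |r si - r sj| + c * |(∑ s', P si s' * V s') - ∑ s', P sj s' * V s'| := by
        calc _ ≤ |r si - r sj| + |c * ((∑ s', P si s' * V s') - ∑ s', P sj s' * V s')| :=
              abs_add_le _ _
          _ = _ := by rw [abs_mul, abs_of_nonneg hc0]
      nlinarith [abs_nonneg ((∑ s', P si s' * V s') - ∑ s', P sj s' * V s')]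
    have hcW : c * ((1 - c) * |(∑ s', P si s' * V s') - ∑ s', P sj s' * V s'|)
        ≤ c * (W1 d (P si) (P sj) + M) :=
      mul_le_mul_of_nonneg_left (by linarith) hc0
    rw [hfix si sj]
    linarith
  obtain ⟨p0, _, hp0⟩ := Finset.exists_mem_eq_sup' hne f
  have hMc : M ≤ c * M := by
    have h := key p0.1 p0.2
    rw [show (1 - c) * |V p0.1 - V p0.2| - d p0.1 p0.2 = f p0 from rfl, ← hp0, ← hM] at h
    exact h
  have hM0 : M ≤ 0 := by nlinarith
  intro si sj
  have := hle si sj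
  have : c * M ≤ 0 := mul_nonpos_of_nonneg_of_nonpos hc0 hM0
  linarith [key si sj]
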